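/- If the weighted generalized shift σ_{φ,𝔴} : V^Γ → V^Γ is a linear isomorphism, then Eigen(σ_{φ,𝔴}, V^Γ) = F \ {0} in case W(φ) ≠ ∅, and Eigen(σ_{φ,𝔴}, V^Γ) = {r ∈ F \ {0} : there exists θ ∈ P(φ) with ∏_{0≤i<per(θ)} 𝔴_{φ^i(θ)} = r^{per(θ)}} in case W(φ) = ∅. -/

import Mathlib

open Function Set

/-- The weighted generalized shift `σ_{φ,𝔴}` on `V^Γ`,
sending `(x_α)_α` to `(𝔴_α • x_{φ(α)})_α`. -/
noncomputable def shiftW {F V Γ : Type*} [Field F] [AddCommGroup V] [Module F V]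
    (φ : Γ → Γ) (w : Γ → F) : (Γ → V) →ₗ[F] (Γ → V) where
  toFun x := fun α => w α • x (φ α)
  map_add' x y := by funext α; simp
  map_smul' c x := by
    funext α
    simp only [Pi.smul_apply, RingHom.id_apply]
    rw [smul_comm]

/-- The set of eigenvalues of a linear self-map `T` of `W`:
all `r` such that `T x = r • x` for some nonzero `x`. -/
def Eigen {F W : Type*} [Field F] [AddCommGroup W] [Module F W] (T : W →ₗ[F] W) : Set F :=
  {r | ∃ x : W, x ≠ 0 ∧ T x = r • x}

/-- Wandering points of `φ`: points `α` such that the sequence `(φ^n(α))_{n ≥ 1}` is injective. -/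
def wanderSet {Γ : Type*} (φ : Γ → Γ) : Set Γ :=
  {α | Function.Injective fun n : ℕ => φ^[n + 1] α}

/-- Periodic points of `φ`: points `α` with `φ^n(α) = α` for some `n ≥ 1`. -/
def periodicSet {Γ : Type*} (φ : Γ → Γ) : Set Γ :=
  {α | ∃ n : ℕ, 1 ≤ n ∧ φ^[n] α = α}

/-- `per(α) = min {n ≥ 1 : φ^n(α) = α}` for a periodic point `α`. -/
noncomputable def perOf {Γ : Type*} (φ : Γ → Γ) (α : Γ) : ℕ :=
  sInf {n : ℕ | 1 ≤ n ∧ φ^[n] α = α}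

section MyAux

variable {F V Γ : Type*} [Field F] [AddCommGroup V] [Module F V]

lemma shiftW_apply (φ : Γ → Γ) (w : Γ → F) (x : Γ → V) (α : Γ) :
    shiftW (V := V) φ w x α = w α • x (φ α) := rfl

lemma shiftW_w_ne [Nontrivial V] (φ : Γ → Γ) (w : Γ → F)
    (h : Function.Surjective (shiftW (V := V) φ w)) (α : Γ) : w α ≠ 0 := by
  classical
  intro hw
  obtain ⟨v, hv⟩ := exists_ne (0 : V)
  obtain ⟨x, hx⟩ := h (fun β => if β = α then v else 0)
  have h1 := congrFun hx α
  rw [shiftW_apply, hw, zero_smul, if_pos rfl] at h1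
  exact hv h1.symm

lemma shiftW_phi_inj [Nontrivial V] (φ : Γ → Γ) (w : Γ → F)
    (h : Function.Surjective (shiftW (V := V) φ w)) : Function.Injective φ := by
  classical
  intro a b hab
  by_contra hne
  obtain ⟨v, hv⟩ := exists_ne (0 : V)
  obtain ⟨x, hx⟩ := h (fun β => if β = a then v else 0)
  have ha := congrFun hx a
  have hb := congrFun hx b
  rw [shiftW_apply, if_pos rfl] at ha
  rw [shiftW_apply, if_neg (Ne.symm hne)] at hb
  have hxb : x (φ b) = 0 := by
    rcases smul_eq_zero.1 hb with h0 | h0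
    · exact absurd h0 (shiftW_w_ne φ w h b)
    · exact h0
  rw [hab, hxb, smul_zero] at ha
  exact hv ha.symm

lemma shiftW_phi_surj [Nontrivial V] (φ : Γ → Γ) (w : Γ → F)
    (h : Function.Injective (shiftW (V := V) φ w)) : Function.Surjective φ := by
  classical
  intro γ
  by_contra hγ
  push_neg at hγ
  obtain ⟨v, hv⟩ := exists_ne (0 : V)
  have hz : (fun β => if β = γ then v else (0:V)) = 0 := by
    apply h
    have h2 : shiftW (V := V) φ w (fun β => if β = γ then v else (0:V)) = 0 := by
      funext α
      rw [shiftW_apply, if_neg (hγ α), smul_zero]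
      rfl
    rw [h2, map_zero]
  have h3 := congrFun hz γ
  rw [if_pos rfl] at h3
  exact hv h3

lemma eigen_ne_zero (φ : Γ → Γ) (w : Γ → F)
    (h : Function.Injective (shiftW (V := V) φ w)) {r : F}
    (hr : r ∈ Eigen (shiftW (V := V) φ w)) : r ≠ 0 := by
  obtain ⟨x, hx, hxe⟩ := hr
  rintro rfl
  rw [zero_smul] at hxe
  exact hx (h (hxe.trans (map_zero (shiftW (V := V) φ w)).symm))

/-- the ℤ-indexed scalar sequence for the wandering-orbit eigenvector -/
noncomputable def cZ (r : F) (g : ℤ → F) : ℤ → F := fun n =>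
  r ^ n * (∏ i ∈ Finset.range (-n).toNat, g (-1 - (i:ℤ))) *
    (∏ i ∈ Finset.range n.toNat, g (i:ℤ))⁻¹

lemma cZ_zero (r : F) (g : ℤ → F) : cZ r g 0 = 1 := by simp [cZ]

lemma cZ_rec {r : F} (hr : r ≠ 0) {g : ℤ → F} (hg : ∀ n, g n ≠ 0) (n : ℤ) :
    g n * cZ r g (n + 1) = r * cZ r g n := by
  have hA : ∀ m : ℕ, (∏ i ∈ Finset.range m, g (i:ℤ)) ≠ 0 :=
    fun m => Finset.prod_ne_zero_iff.2 fun i _ => hg _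
  have hB : ∀ m : ℕ, (∏ i ∈ Finset.range m, g (-1 - (i:ℤ))) ≠ 0 :=
    fun m => Finset.prod_ne_zero_iff.2 fun i _ => hg _
  rcases le_or_gt 0 n with hn | hn
  · have h1 : (-n).toNat = 0 := by omega
    have h2 : (-(n+1)).toNat = 0 := by omega
    have h3 : (n+1).toNat = n.toNat + 1 := by omega
    have h4 : ((n.toNat : ℤ)) = n := by omega
    rw [cZ, cZ, h1, h2, h3, Finset.prod_range_succ, h4, zpow_add_one₀ hr]
    field_simp [hg n, hA n.toNat]
  · have h1 : n.toNat = 0 := by omega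
    have h2 : (n+1).toNat = 0 := by omega
    have h3 : (-n).toNat = (-(n+1)).toNat + 1 := by omega
    have h4 : (-1 - (((-(n+1)).toNat : ℕ) : ℤ)) = n := by omega
    rw [cZ, cZ, h1, h2, h3, Finset.prod_range_succ, h4, zpow_add_one₀ hr]
    field_simp [hg n, hB ((-(n+1)).toNat)]

/-- the ℕ-indexed scalar sequence for the periodic-orbit eigenvector -/
noncomputable def cN (r : F) (u : ℕ → F) : ℕ → F := fun i =>
  r ^ i * (∏ j ∈ Finset.range i, u j)⁻¹

lemma cN_zero (r : F) (u : ℕ → F) : cN r u 0 = 1 := by simp [cN]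

lemma cN_rec {r : F} (hr : r ≠ 0) {u : ℕ → F} (hu : ∀ i, u i ≠ 0) (i : ℕ) :
    u i * cN r u (i + 1) = r * cN r u i := by
  have hA : ∀ m : ℕ, (∏ j ∈ Finset.range m, u j) ≠ 0 :=
    fun m => Finset.prod_ne_zero_iff.2 fun j _ => hu _
  rw [cN, cN, Finset.prod_range_succ, pow_succ]
  field_simp [hu i, hA i]

end MyAux

theorem eigen_of_isomorphic_weighted_generalized_shift
    {F V Γ : Type*} [Field F] [AddCommGroup V] [Module F V] [Nonempty Γ] [Nontrivial V]
    (φ : Γ → Γ) (w : Γ → F) (h : Function.Bijective (shiftW (V := V) φ w)) :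
    ((wanderSet φ).Nonempty → Eigen (shiftW (V := V) φ w) = {r : F | r ≠ 0}) ∧
    (wanderSet φ = ∅ →
      Eigen (shiftW (V := V) φ w) =
        {r : F | r ≠ 0 ∧ ∃ θ ∈ periodicSet φ,
          ∏ i ∈ Finset.range (perOf φ θ), w (φ^[i] θ) = r ^ perOf φ θ}) := by
  classical
  obtain ⟨v, hv⟩ := exists_ne (0 : V)
  have hw : ∀ α, w α ≠ 0 := shiftW_w_ne φ w h.2
  have hinj : Function.Injective φ := shiftW_phi_inj φ w h.2
  have hsurj : Function.Surjective φ := shiftW_phi_surj φ w h.1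
  set ψ : Equiv.Perm Γ := Equiv.ofBijective φ ⟨hinj, hsurj⟩ with hψ
  have hψφ : ∀ α, ψ α = φ α := fun α => rfl
  have hψn : ∀ (n : ℕ) (α : Γ), (ψ ^ n) α = φ^[n] α := fun n α => rfl
  constructor
  · -- wandering case
    rintro ⟨β, hβ⟩
    ext r
    simp only [Set.mem_setOf_eq]
    constructor
    · exact fun hr => eigen_ne_zero φ w h.1 hr
    · intro hr
      set j : ℤ → Γ := fun n => (ψ ^ n) β with hj
      have hjsucc : ∀ n : ℤ, φ (j n) = j (n + 1) := by
        intro n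
        show φ ((ψ ^ n) β) = (ψ ^ (n+1)) β
        rw [add_comm, zpow_add, zpow_one, Equiv.Perm.mul_apply, hψφ]
      have hjlt : ∀ m k : ℤ, m < k → j m = j k → False := by
        intro m k hmk he
        have h5 : (ψ ^ (-m) * ψ ^ m) β = (ψ ^ (-m) * ψ ^ k) β := by
          rw [Equiv.Perm.mul_apply, Equiv.Perm.mul_apply]
          exact congrArg _ he
        rw [← zpow_add, ← zpow_add, neg_add_cancel, zpow_zero, Equiv.Perm.one_apply] at h5
        set d : ℤ := -m + k with hd
        have hd0 : 0 < d := by omega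
        have hdn : (ψ ^ d) β = φ^[d.toNat] β := by
          rw [← hψn]
          congr 1
          rw [← zpow_natCast]
          congr 1
          omega
        have hper : φ^[d.toNat] β = β := by rw [← hdn, ← h5]
        have h6 : (0:ℕ) = d.toNat := hβ (by
          show φ^[0+1] β = φ^[d.toNat+1] β
          rw [Function.iterate_succ_apply' φ d.toNat β, hper]
          simp)
        omega
      have hjinj : Function.Injective j := by
        intro m k he
        rcases lt_trichotomy m k with hc | hc | hc
        · exact (hjlt m k hc he).elim
        · exact hc
        · exact (hjlt k m hc he.symm).elim
      set g : ℤ → F := fun n => w (j n) with hg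
      have hgne : ∀ n, g n ≠ 0 := fun n => hw _
      set c : ℤ → F := cZ r g with hc
      set x : Γ → V := Function.extend j (fun n => c n • v) (fun _ => 0) with hx
      have hxj : ∀ n : ℤ, x (j n) = c n • v := fun n => hjinj.extend_apply _ _ n
      refine ⟨x, ?_, ?_⟩
      · intro hx0
        have h7 := congrFun hx0 (j 0)
        rw [hxj 0, hc, cZ_zero, one_smul] at h7
        exact hv h7
      · funext α
        rw [shiftW_apply, Pi.smul_apply]
        by_cases hα : ∃ n : ℤ, j n = α
        · obtain ⟨n, rfl⟩ := hα
          rw [hjsucc n, hxj, hxj, smul_smul, smul_smul, hc, cZ_rec hr hgne n]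
        · have hα' : ¬∃ n : ℤ, j n = φ α := by
            rintro ⟨m, hm⟩
            exact hα ⟨m - 1, hinj (by rw [hjsucc (m-1), sub_add_cancel, hm])⟩
          rw [hx, Function.extend_apply' _ _ _ hα, Function.extend_apply' _ _ _ hα',
            smul_zero, smul_zero]
  · -- no wandering points
    intro hW
    ext r
    simp only [Set.mem_setOf_eq]
    constructor
    · rintro hre
      have hr : r ≠ 0 := eigen_ne_zero φ w h.1 hre
      obtain ⟨x, hx, hxe⟩ := hre
      refine ⟨hr, ?_⟩
      obtain ⟨α, hα⟩ : ∃ α, x α ≠ 0 := by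
        by_contra hcon; push_neg at hcon
        exact hx (funext fun α => hcon α)
      have hnw : α ∉ wanderSet φ := by rw [hW]; exact Set.notMem_empty α
      have hαper : α ∈ periodicSet φ := by
        rw [wanderSet, Set.mem_setOf_eq] at hnw
        rw [Function.Injective] at hnw
        push_neg at hnw
        obtain ⟨m, k, he, hne⟩ := hnw
        rcases hne.lt_or_gt with hmk | hmk
        · refine ⟨k - m, by omega, ?_⟩
          have h8 : φ^[m+1] (φ^[k-m] α) = φ^[m+1] α := by
            rw [← Function.iterate_add_apply, show m + 1 + (k - m) = k + 1 by omega]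
            exact he.symm
          exact (hinj.iterate (m+1)) h8
        · refine ⟨m - k, by omega, ?_⟩
          have h8 : φ^[k+1] (φ^[m-k] α) = φ^[k+1] α := by
            rw [← Function.iterate_add_apply, show k + 1 + (m - k) = m + 1 by omega]
            exact he
          exact (hinj.iterate (k+1)) h8
      set p := perOf φ α with hp
      have hpmem : 1 ≤ p ∧ φ^[p] α = α := Nat.sInf_mem hαper
      have key : ∀ i : ℕ, (∏ j ∈ Finset.range i, w (φ^[j] α)) • x (φ^[i] α)
          = r ^ i • x α := by
        intro i
        induction i with
        | zero => simp
        | succ k ih =>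
          have he := congrFun hxe (φ^[k] α)
          rw [shiftW_apply, Pi.smul_apply] at he
          rw [Finset.prod_range_succ, iterate_succ_apply', pow_succ, mul_smul, he,
            smul_comm, ih, smul_smul, mul_comm r (r ^ k)]
      have hkey := key p
      rw [hpmem.2] at hkey
      refine ⟨α, hαper, ?_⟩
      have hsub : ((∏ j ∈ Finset.range p, w (φ^[j] α)) - r ^ p) • x α = 0 := by
        rw [sub_smul, hkey, sub_self]
      rcases smul_eq_zero.1 hsub with h0 | h0
      · exact sub_eq_zero.1 h0
      · exact absurd h0 hα
    · rintro ⟨hr, θ, hθ, hprod⟩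
      set p := perOf φ θ with hp
      have hpmem : 1 ≤ p ∧ φ^[p] θ = θ := Nat.sInf_mem hθ
      have hpmin : ∀ m, 1 ≤ m → φ^[m] θ = θ → p ≤ m := fun m h1 h2 => Nat.sInf_le ⟨h1, h2⟩
      set u : ℕ → F := fun i => w (φ^[i] θ) with hu
      have hune : ∀ i, u i ≠ 0 := fun i => hw _
      set c : ℕ → F := cN r u with hc
      have hcp : c p = 1 := by
        rw [hc, cN]
        show r ^ p * (∏ j ∈ Finset.range p, u j)⁻¹ = 1
        rw [show (∏ j ∈ Finset.range p, u j) = r ^ p from hprod,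
          mul_inv_cancel₀ (pow_ne_zero p hr)]
      haveI : NeZero p := ⟨by omega⟩
      set jB : Fin p → Γ := fun i => φ^[i.val] θ with hjB
      have hjBlt : ∀ a b : Fin p, a.val ≤ b.val → jB a = jB b → a = b := by
        intro a b hab he
        have h9 : φ^[a.val] (φ^[b.val - a.val] θ) = φ^[a.val] θ := by
          rw [← Function.iterate_add_apply, show a.val + (b.val - a.val) = b.val by omega]
          exact he.symm
        have h2 : φ^[b.val - a.val] θ = θ := (hinj.iterate a.val) h9
        have h3 : b.val - a.val = 0 := by
          by_contra hne
          have h4 := hpmin _ (by omega) h2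
          have h5 := b.isLt
          omega
        exact Fin.ext (by omega)
      have hjBinj : Function.Injective jB := by
        intro a b he
        rcases le_total a.val b.val with hab | hab
        · exact hjBlt a b hab he
        · exact (hjBlt b a hab he.symm).symm
      have hvadd : ∀ i : Fin p, ((i + 1 : Fin p)).val = (i.val + 1) % p := by
        intro i
        rw [Fin.val_add, Fin.val_one' p, Nat.add_mod i.val 1 p,
          Nat.mod_eq_of_lt i.isLt]
      have hjBsucc : ∀ i : Fin p, φ (jB i) = jB (i + 1) := by
        intro i
        show φ (φ^[i.val] θ) = φ^[(i+1 : Fin p).val] θ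
        rw [← Function.iterate_succ_apply' φ i.val θ, hvadd i]
        by_cases hi : i.val + 1 < p
        · rw [Nat.mod_eq_of_lt hi]
        · have h10 : i.val + 1 = p := by have := i.isLt; omega
          rw [Nat.succ_eq_add_one, h10, Nat.mod_self, hpmem.2]
          rfl
      have hcsucc : ∀ i : Fin p, c ((i + 1 : Fin p)).val = c (i.val + 1) := by
        intro i
        rw [hvadd i]
        by_cases hi : i.val + 1 < p
        · rw [Nat.mod_eq_of_lt hi]
        · have h10 : i.val + 1 = p := by have := i.isLt; omega
          rw [h10, Nat.mod_self, hcp, hc, cN_zero]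
      set x : Γ → V := Function.extend jB (fun i => c i.val • v) (fun _ => 0) with hx
      have hxj : ∀ i : Fin p, x (jB i) = c i.val • v := fun i => hjBinj.extend_apply _ _ i
      refine ⟨x, ?_, ?_⟩
      · intro hx0
        have h11 := congrFun hx0 (jB 0)
        rw [hxj 0, Fin.val_zero p, hc, cN_zero, one_smul] at h11
        exact hv h11
      · funext α
        rw [shiftW_apply, Pi.smul_apply]
        by_cases hα : ∃ i : Fin p, jB i = α
        · obtain ⟨i, rfl⟩ := hα
          rw [hjBsucc i, hxj, hxj, smul_smul, smul_smul, hcsucc i,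
            show w (jB i) = u i.val from rfl, hc, cN_rec hr hune i.val]
        · have hα' : ¬∃ i : Fin p, jB i = φ α := by
            rintro ⟨m, hm⟩
            exact hα ⟨m - 1, hinj (by rw [hjBsucc (m-1), sub_add_cancel, hm])⟩
          rw [hx, Function.extend_apply' _ _ _ hα, Function.extend_apply' _ _ _ hα',
            smul_zero, smul_zero]
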